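/- For fixed constants t > 0, τ > 0, ν ≥ 2 with t - ντ > 0, α > 0, μ > 0, the function f(ℓ) = ℓ·(1 - exp(-(αμ/ℓ)(t - ℓ/μ - τν))) is strictly concave on ℓ > 0; specifically, its second derivative equals -exp(-(αμ/ℓ)(t - ντ - ℓ/μ)) · α²μ²(t - ντ)² / ℓ³ < 0. -/

import Mathlib

/-- The expected-return function f(ℓ) = ℓ(1 - exp(-(αμ/ℓ)(t - ℓ/μ - τν))) is strictly concave
on ℓ > 0, with second derivative -exp(-(αμ/ℓ)(t - ντ - ℓ/μ))·α²μ²(t - ντ)²/ℓ³ < 0. -/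
theorem stmt_3 (t τ α μ : ℝ) (ν : ℕ) (ht : 0 < t) (hτ : 0 < τ) (hν : 2 ≤ ν)
    (hα : 0 < α) (hμ : 0 < μ) (hs : 0 < t - ν * τ) :
    StrictConcaveOn ℝ (Set.Ioi (0 : ℝ))
      (fun ℓ : ℝ => ℓ * (1 - Real.exp (-(α * μ / ℓ) * (t - ℓ / μ - τ * ν)))) ∧
    ∀ ℓ : ℝ, 0 < ℓ →
      deriv (deriv (fun ℓ : ℝ => ℓ * (1 - Real.exp (-(α * μ / ℓ) * (t - ℓ / μ - τ * ν))))) ℓ =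
          -Real.exp (-(α * μ / ℓ) * (t - ν * τ - ℓ / μ)) *
            (α ^ 2 * μ ^ 2 * (t - ν * τ) ^ 2) / ℓ ^ 3 ∧
      deriv (deriv (fun ℓ : ℝ => ℓ * (1 - Real.exp (-(α * μ / ℓ) * (t - ℓ / μ - τ * ν))))) ℓ
        < 0 := by
  set f : ℝ → ℝ := fun ℓ : ℝ => ℓ * (1 - Real.exp (-(α * μ / ℓ) * (t - ℓ / μ - τ * ν)))
    with hfdef
  set c : ℝ := α * μ * (t - ν * τ) with hc
  have hc0 : 0 < c := mul_pos (mul_pos hα hμ) hs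
  have hμ' : μ ≠ 0 := ne_of_gt hμ
  -- f coincides with a nicer expression away from 0
  have key : ∀ ℓ : ℝ, ℓ ≠ 0 →
      f ℓ = ℓ - ℓ * Real.exp (α - c / ℓ) := by
    intro ℓ hℓ
    have hexp : -(α * μ / ℓ) * (t - ℓ / μ - τ * ν) = α - c / ℓ := by
      rw [hc]; field_simp; ring
    simp only [hfdef, hexp]; ring
  -- first derivative
  have hd1 : ∀ ℓ : ℝ, ℓ ≠ 0 →
      HasDerivAt f (1 - Real.exp (α - c / ℓ) * (1 + c / ℓ)) ℓ := by
    intro ℓ hℓ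
    have h1 : HasDerivAt (fun x : ℝ => α - c / x) (c / ℓ ^ 2) ℓ := by
      have h := ((hasDerivAt_inv hℓ).const_mul c).const_sub α
      simp only [div_eq_mul_inv]
      exact h.congr_deriv (by ring)
    have hE := h1.exp
    have h2 := (hasDerivAt_id ℓ).sub ((hasDerivAt_id ℓ).mul hE)
    have hev : f =ᶠ[nhds ℓ] fun x => x - x * Real.exp (α - c / x) := by
      filter_upwards [isOpen_compl_singleton.mem_nhds hℓ] with x hx
      exact key x hx
    have h3 : HasDerivAt f (1 * 1 - (1 * Real.exp (α - c / ℓ) +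
        ℓ * (Real.exp (α - c / ℓ) * (c / ℓ ^ 2)))) ℓ := by
      refine HasDerivAt.congr_of_eventuallyEq ?_ hev
      exact h2.congr_deriv (by simp)
    convert h3 using 1
    field_simp
  set g : ℝ → ℝ := fun x => 1 - Real.exp (α - c / x) * (1 + c / x) with hg
  -- second derivative
  have hd2 : ∀ ℓ : ℝ, ℓ ≠ 0 →
      HasDerivAt g (-Real.exp (α - c / ℓ) * c ^ 2 / ℓ ^ 3) ℓ := by
    intro ℓ hℓ
    have h1 : HasDerivAt (fun x : ℝ => α - c / x) (c / ℓ ^ 2) ℓ := by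
      have h := ((hasDerivAt_inv hℓ).const_mul c).const_sub α
      simp only [div_eq_mul_inv]
      exact h.congr_deriv (by ring)
    have hq : HasDerivAt (fun x : ℝ => 1 + c / x) (-(c / ℓ ^ 2)) ℓ := by
      have h := ((hasDerivAt_inv hℓ).const_mul c).const_add 1
      simp only [div_eq_mul_inv]
      exact h.congr_deriv (by ring)
    have h2 := (h1.exp.mul hq).const_sub 1
    refine h2.congr_deriv ?_
    field_simp
    ring
  have hsecond : ∀ ℓ : ℝ, 0 < ℓ →
      deriv (deriv f) ℓ = -Real.exp (α - c / ℓ) * c ^ 2 / ℓ ^ 3 := by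
    intro ℓ hℓ
    have hℓ' : ℓ ≠ 0 := ne_of_gt hℓ
    have hdg : deriv f =ᶠ[nhds ℓ] g := by
      filter_upwards [isOpen_compl_singleton.mem_nhds hℓ'] with x hx
      exact (hd1 x hx).deriv
    rw [hdg.deriv_eq]
    exact (hd2 ℓ hℓ').deriv
  have hrw : ∀ ℓ : ℝ, 0 < ℓ →
      -Real.exp (α - c / ℓ) * c ^ 2 / ℓ ^ 3 =
        -Real.exp (-(α * μ / ℓ) * (t - ν * τ - ℓ / μ)) *
          (α ^ 2 * μ ^ 2 * (t - ν * τ) ^ 2) / ℓ ^ 3 := by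
    intro ℓ hℓ
    have hℓ' : ℓ ≠ 0 := ne_of_gt hℓ
    have hexp : -(α * μ / ℓ) * (t - ν * τ - ℓ / μ) = α - c / ℓ := by
      rw [hc]; field_simp; ring
    rw [hexp, hc]
    ring
  have hneg : ∀ ℓ : ℝ, 0 < ℓ →
      -Real.exp (α - c / ℓ) * c ^ 2 / ℓ ^ 3 < 0 := by
    intro ℓ hℓ
    rw [neg_mul, neg_div]
    have : 0 < Real.exp (α - c / ℓ) * c ^ 2 / ℓ ^ 3 := by positivity
    linarith
  refine ⟨?_, fun ℓ hℓ => ⟨by rw [hsecond ℓ hℓ, hrw ℓ hℓ], by rw [hsecond ℓ hℓ]; exact hneg ℓ hℓ⟩⟩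
  apply strictConcaveOn_of_deriv2_neg (convex_Ioi 0)
  · intro x hx
    exact (hd1 x (ne_of_gt hx)).continuousAt.continuousWithinAt
  · intro x hx
    rw [interior_Ioi] at hx
    simp only [Function.iterate_succ, Function.iterate_zero, Function.comp,
      Function.comp_apply, id_eq]
    rw [hsecond x hx]
    exact hneg x hx
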